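/- arXiv:2301.08614 — 7 statements merged into one kernel-verified Lean document; each statement's English description precedes it below -/
import Mathlib

section
/- Let d ≥ 1 be an integer, k, m ∈ ℤ^d with m ≠ 0, γ > 0, κ > 0, and s ∈ ℝ. If 4γ²κ(2π)^{2d} s² ≤ m², then every eigenvalue λ of the matrix L_{k,m} = [[−i(k·m), m²/2], [−m²/2 + 2(2π)^{2d} γ² κ s², −i(k·m)]] is purely imaginary, i.e. Re λ = 0. -/
/-- `lam` is an eigenvalue of the complex 2×2 matrix `A`. -/
def IsEigenvalue (A : Matrix (Fin 2) (Fin 2) ℂ) (lam : ℂ) : Prop :=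
  ∃ v : Fin 2 → ℂ, v ≠ 0 ∧ A.mulVec v = lam • v

theorem stmt2 (d : ℕ) (hd : 1 ≤ d) (k m : Fin d → ℤ) (hm : m ≠ 0)
    (γ κ s : ℝ) (hγ : 0 < γ) (hκ : 0 < κ)
    (hsmall : 4 * γ ^ 2 * κ * (2 * Real.pi) ^ (2 * d) * s ^ 2 ≤ ((∑ j, (m j) ^ 2 : ℤ) : ℝ)) :
    ∀ lam : ℂ,
      IsEigenvalue
        !![-Complex.I * ((∑ j, k j * m j : ℤ) : ℂ), ((∑ j, (m j) ^ 2 : ℤ) : ℂ) / 2;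
           -((∑ j, (m j) ^ 2 : ℤ) : ℂ) / 2
             + ((2 * (2 * Real.pi) ^ (2 * d) * γ ^ 2 * κ * s ^ 2 : ℝ) : ℂ),
           -Complex.I * ((∑ j, k j * m j : ℤ) : ℂ)] lam
      → lam.re = 0 := by
  -- real quantities
  set Mr : ℝ := ((∑ j, (m j) ^ 2 : ℤ) : ℝ) with hMr
  set Cr : ℝ := 2 * (2 * Real.pi) ^ (2 * d) * γ ^ 2 * κ * s ^ 2 with hCr
  have hMpos : (0:ℝ) < Mr := by
    have : (0:ℤ) < ∑ j, (m j) ^ 2 := by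
      rcases Function.ne_iff.mp hm with ⟨j, hj⟩
      have : (0:ℤ) < (m j) ^ 2 := by
        rw [pow_two]; exact mul_self_pos.mpr hj
      exact Finset.sum_pos' (fun i _ => by positivity) ⟨j, Finset.mem_univ j, this⟩
    rw [hMr]; exact_mod_cast this
  have hC2 : 2 * Cr ≤ Mr := by
    have : 2 * Cr = 4 * γ ^ 2 * κ * (2 * Real.pi) ^ (2 * d) * s ^ 2 := by ring
    rw [this]; exact hsmall
  intro lam ⟨v, hv, hAv⟩
  set K : ℂ := ((∑ j, k j * m j : ℤ) : ℂ) with hK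
  have hKre : K.im = 0 := by simp [hK]
  set M : ℂ := ((∑ j, (m j) ^ 2 : ℤ) : ℂ) with hM
  have hMC : M = (Mr : ℂ) := by rw [hM, hMr]; push_cast; ring
  have h0 := congrFun hAv 0
  have h1 := congrFun hAv 1
  simp [Matrix.mulVec, dotProduct, Fin.sum_univ_two, Matrix.cons_val_zero,
    Matrix.cons_val_one, Pi.smul_apply, smul_eq_mul] at h0 h1
  have hMne : M ≠ 0 := by
    rw [hMC]
    exact_mod_cast ne_of_gt hMpos
  have hv0 : v 0 ≠ 0 := by
    intro h
    apply hv
    have h1' : M / 2 * v 1 = 0 := by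
      rw [h] at h0; linear_combination h0
    have : v 1 = 0 := by
      rcases mul_eq_zero.mp h1' with h' | h'
      · exact absurd h' (by simp [hMne])
      · exact h'
    funext i; fin_cases i <;> simp [h, this]
  -- characteristic relation
  set a : ℂ := -Complex.I * K with ha
  have e0 : M / 2 * v 1 = (lam - a) * v 0 := by linear_combination h0
  have e1 : (-(M) / 2 + (Cr : ℂ)) * v 0 = (lam - a) * v 1 := by linear_combination h1
  have key : (lam - a) ^ 2 = M / 2 * (-(M) / 2 + (Cr : ℂ)) := by
    have : (lam - a) ^ 2 * v 0 = M / 2 * (-(M) / 2 + (Cr : ℂ)) * v 0 := by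
      calc (lam - a) ^ 2 * v 0 = (lam - a) * ((lam - a) * v 0) := by ring
        _ = (lam - a) * (M / 2 * v 1) := by rw [e0]
        _ = M / 2 * ((lam - a) * v 1) := by ring
        _ = M / 2 * ((-(M) / 2 + (Cr : ℂ)) * v 0) := by rw [e1]
        _ = M / 2 * (-(M) / 2 + (Cr : ℂ)) * v 0 := by ring
    exact mul_right_cancel₀ hv0 this
  -- rhs is a nonpositive real number
  set r : ℝ := Mr / 2 * (-Mr / 2 + Cr) with hr
  have hrle : r ≤ 0 := by
    have : -Mr / 2 + Cr ≤ 0 := by linarith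
    have := mul_nonpos_of_nonneg_of_nonpos (by linarith : (0:ℝ) ≤ Mr / 2) this
    simpa [hr] using this
  have key2 : (lam - a) ^ 2 = (r : ℂ) := by
    rw [key, hMC]; push_cast [hr]; ring
  set μ : ℂ := lam - a with hμ
  have himeq : μ.re * μ.im + μ.im * μ.re = 0 := by
    have := congrArg Complex.im key2
    simpa [pow_two, Complex.mul_im] using this
  have hre : μ.re * μ.re - μ.im * μ.im = r := by
    have := congrArg Complex.re key2
    simpa [pow_two, Complex.mul_re] using this
  have hμre : μ.re = 0 := by
    rcases mul_eq_zero.mp (by linarith : μ.re * μ.im = 0) with h | h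
    · exact h
    · nlinarith
  have : lam.re = μ.re := by
    simp [hμ, ha, Complex.sub_re, Complex.mul_re, Complex.neg_re, Complex.I_re,
      Complex.I_im, hKre]
  rw [this, hμre]
end

section
/- Let d ≥ 1 be an integer, k, m ∈ ℤ^d with m ≠ 0, γ > 0, κ > 0, and s ∈ ℝ. If 4γ²κ(2π)^{2d} s² > m², then every eigenvalue of the matrix L_{k,m} = [[−i(k·m), m²/2], [−m²/2 + 2(2π)^{2d} γ² κ s², −i(k·m)]] has nonzero real part, and L_{k,m} possesses an eigenvalue λ₊ with Re λ₊ > 0. -/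
lemma eig_char (a b c lam : ℂ) (hb : b ≠ 0) (hc : c ≠ 0)
    (h : IsEigenvalue !![a, b; c, a] lam) : (lam - a) ^ 2 = b * c := by
  obtain ⟨v, hv, hAv⟩ := h
  have h0 := congrFun hAv 0
  have h1 := congrFun hAv 1
  simp [Matrix.mulVec, dotProduct, Fin.sum_univ_two] at h0 h1
  have e0 : b * v 1 = (lam - a) * v 0 := by linear_combination h0
  have e1 : c * v 0 = (lam - a) * v 1 := by linear_combination h1
  have hv0 : v 0 ≠ 0 := by
    intro h00
    apply hv
    have hv1 : v 1 = 0 := by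
      have := e0
      rw [h00, mul_zero] at this
      exact (mul_eq_zero.mp this).resolve_left hb
    funext i
    fin_cases i <;> simp [h00, hv1]
  have hv1 : v 1 ≠ 0 := by
    intro h11
    apply hv0
    have := e1
    rw [h11, mul_zero] at this
    exact (mul_eq_zero.mp this).resolve_left hc
  have key : (lam - a) ^ 2 * (v 0 * v 1) = (b * c) * (v 0 * v 1) := by
    linear_combination (-(c * v 0)) * e0 - (lam - a) * v 0 * e1
  exact mul_right_cancel₀ (mul_ne_zero hv0 hv1) key

lemma eig_exists (a b c r : ℂ) (hb : b ≠ 0) (hr : r ^ 2 = b * c) :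
    IsEigenvalue !![a, b; c, a] (a + r) := by
  refine ⟨![b, r], ?_, ?_⟩
  · intro h
    exact hb (by simpa using congrFun h 0)
  · funext i
    fin_cases i <;>
      simp [Matrix.mulVec, dotProduct, Fin.sum_univ_two]
    · ring
    · linear_combination -hr

theorem stmt3 (d : ℕ) (hd : 1 ≤ d) (k m : Fin d → ℤ) (hm : m ≠ 0)
    (γ κ s : ℝ) (hγ : 0 < γ) (hκ : 0 < κ)
    (hbig : ((∑ j, (m j) ^ 2 : ℤ) : ℝ) < 4 * γ ^ 2 * κ * (2 * Real.pi) ^ (2 * d) * s ^ 2) :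
    (∀ lam : ℂ,
      IsEigenvalue
        !![-Complex.I * ((∑ j, k j * m j : ℤ) : ℂ), ((∑ j, (m j) ^ 2 : ℤ) : ℂ) / 2;
           -((∑ j, (m j) ^ 2 : ℤ) : ℂ) / 2
             + ((2 * (2 * Real.pi) ^ (2 * d) * γ ^ 2 * κ * s ^ 2 : ℝ) : ℂ),
           -Complex.I * ((∑ j, k j * m j : ℤ) : ℂ)] lam
      → lam.re ≠ 0) ∧
    (∃ lam : ℂ,
      IsEigenvalue
        !![-Complex.I * ((∑ j, k j * m j : ℤ) : ℂ), ((∑ j, (m j) ^ 2 : ℤ) : ℂ) / 2;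
           -((∑ j, (m j) ^ 2 : ℤ) : ℂ) / 2
             + ((2 * (2 * Real.pi) ^ (2 * d) * γ ^ 2 * κ * s ^ 2 : ℝ) : ℂ),
           -Complex.I * ((∑ j, k j * m j : ℤ) : ℂ)] lam
      ∧ 0 < lam.re) := by
  -- real quantities
  set MrZ : ℤ := ∑ j, (m j) ^ 2 with hMrZ
  have hMZpos : 0 < MrZ := by
    have : ∃ j, m j ≠ 0 := by
      by_contra h
      push_neg at h
      exact hm (funext h)
    obtain ⟨j, hj⟩ := this
    apply Finset.sum_pos'
    · intro i _; positivity
    · exact ⟨j, Finset.mem_univ j, by positivity⟩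
  have hMpos : (0 : ℝ) < (MrZ : ℝ) := by exact_mod_cast hMZpos
  set X : ℝ := 2 * (2 * Real.pi) ^ (2 * d) * γ ^ 2 * κ * s ^ 2 with hX
  have hcR : (0 : ℝ) < X - (MrZ : ℝ) / 2 := by
    have : 4 * γ ^ 2 * κ * (2 * Real.pi) ^ (2 * d) * s ^ 2 = 2 * X := by rw [hX]; ring
    rw [this] at hbig
    linarith
  set bcR : ℝ := ((MrZ : ℝ) / 2) * (X - (MrZ : ℝ) / 2) with hbcR
  have hbcpos : 0 < bcR := by positivity
  -- complex entries
  set a : ℂ := -Complex.I * ((∑ j, k j * m j : ℤ) : ℂ) with ha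
  set b : ℂ := ((MrZ : ℤ) : ℂ) / 2 with hb
  set c : ℂ := -((MrZ : ℤ) : ℂ) / 2 + ((X : ℝ) : ℂ) with hc
  have hbne : b ≠ 0 := by
    rw [hb]
    simp only [ne_eq, div_eq_zero_iff]
    push_neg
    constructor
    · exact_mod_cast hMZpos.ne'
    · norm_num
  have hcast : ((bcR : ℝ) : ℂ) = b * c := by
    rw [hbcR, hb, hc]
    push_cast
    ring
  have hcne : c ≠ 0 := by
    intro h
    rw [h, mul_zero] at hcast
    have : bcR = 0 := by exact_mod_cast hcast
    linarith
  have haim : a.re = 0 := by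
    rw [ha]
    simp [Complex.mul_re]
  constructor
  · intro lam hlam
    have hsq : (lam - a) ^ 2 = b * c := eig_char a b c lam hbne hcne hlam
    rw [← hcast] at hsq
    set w : ℂ := lam - a with hw
    have hwre : w.re = lam.re := by rw [hw]; simp [haim]
    have hre : w.re ^ 2 - w.im ^ 2 = bcR := by
      have := congrArg Complex.re hsq
      simpa [pow_two, Complex.mul_re] using this
    have him : 2 * w.re * w.im = 0 := by
      have := congrArg Complex.im hsq
      simp [pow_two, Complex.mul_im] at this
      linarith
    intro h0
    rw [hwre, h0] at hre
    nlinarith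
  · set r : ℝ := Real.sqrt bcR with hr
    have hrpos : 0 < r := Real.sqrt_pos.mpr hbcpos
    have hr2 : ((r : ℝ) : ℂ) ^ 2 = b * c := by
      rw [← hcast]
      rw [← Complex.ofReal_pow]
      norm_cast
      exact Real.sq_sqrt hbcpos.le
    refine ⟨a + (r : ℂ), eig_exists a b c (r : ℂ) hbne hr2, ?_⟩
    simp [haim]
    exact hrpos
end

section
/- Let d ≥ 1 be an integer, γ > 0, κ > 0, and s : ℤ^d → ℝ be such that 4γ²κ(2π)^{2d} s(m)² ≤ m² for every m ∈ ℤ^d with m ≠ 0. Then for every k ∈ ℤ^d and every m ∈ ℤ^d, every eigenvalue λ of the block matrix L_{k,m} — where L_{k,0} = [[0, 0], [2(2π)^{2d} γ² κ s(0)², 0]] and, for m ≠ 0, L_{k,m} = [[−i(k·m), m²/2], [−m²/2 + 2(2π)^{2d} γ² κ s(m)², −i(k·m)]] — satisfies Re λ = 0. -/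
lemma key (α b c : ℂ) (hα : α.im = 0) (him : (b * c).im = 0) (hre : (b * c).re ≤ 0)
    (lam : ℂ) (h : IsEigenvalue !![-Complex.I * α, b; c, -Complex.I * α] lam) :
    lam.re = 0 := by
  obtain ⟨v, hv, heq⟩ := h
  have h0 := congrFun heq 0
  have h1 := congrFun heq 1
  simp [Matrix.mulVec, dotProduct, Fin.sum_univ_two] at h0 h1
  set μ := lam + Complex.I * α with hμ
  have e0 : b * v 1 = μ * v 0 := by rw [hμ]; ring_nf; linear_combination h0
  have e1 : c * v 0 = μ * v 1 := by rw [hμ]; ring_nf; linear_combination h1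
  have hsq : μ ^ 2 = b * c := by
    rcases Function.ne_iff.mp hv with ⟨i, hi⟩
    fin_cases i
    · have : μ ^ 2 * v 0 = b * c * v 0 := by
        calc μ ^ 2 * v 0 = μ * (μ * v 0) := by ring
        _ = μ * (b * v 1) := by rw [e0]
        _ = b * (μ * v 1) := by ring
        _ = b * (c * v 0) := by rw [e1]
        _ = b * c * v 0 := by ring
      exact mul_right_cancel₀ hi this
    · have : μ ^ 2 * v 1 = b * c * v 1 := by
        calc μ ^ 2 * v 1 = μ * (μ * v 1) := by ring
        _ = μ * (c * v 0) := by rw [e1]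
        _ = c * (μ * v 0) := by ring
        _ = c * (b * v 1) := by rw [e0]
        _ = b * c * v 1 := by ring
      exact mul_right_cancel₀ hi this
  have hμre : μ.re = lam.re := by simp [hμ, hα]
  have him2 : (μ ^ 2).im = 0 := by rw [hsq]; exact him
  have hre2 : (μ ^ 2).re ≤ 0 := by rw [hsq]; exact hre
  have h1' : 2 * μ.re * μ.im = 0 := by
    have := him2
    simp [pow_two, Complex.mul_im] at this
    linarith [this]
  have h2' : μ.re ^ 2 - μ.im ^ 2 ≤ 0 := by
    have := hre2
    simp [pow_two, Complex.mul_re] at this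
    nlinarith [this]
  rcases mul_eq_zero.mp h1' with h | h
  · rcases mul_eq_zero.mp h with h | h
    · norm_num at h
    · rw [← hμre]; exact h
  · rw [← hμre]
    nlinarith [h2', sq_nonneg μ.re, h]

theorem stmt4 (d : ℕ) (hd : 1 ≤ d) (γ κ : ℝ) (hγ : 0 < γ) (hκ : 0 < κ)
    (s : (Fin d → ℤ) → ℝ)
    (hsmall : ∀ m : Fin d → ℤ, m ≠ 0 →
      4 * γ ^ 2 * κ * (2 * Real.pi) ^ (2 * d) * (s m) ^ 2 ≤ ((∑ j, (m j) ^ 2 : ℤ) : ℝ)) :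
    ∀ (k m : Fin d → ℤ) (lam : ℂ),
      IsEigenvalue
        (if m = 0 then
          !![0, 0; ((2 * (2 * Real.pi) ^ (2 * d) * γ ^ 2 * κ * (s 0) ^ 2 : ℝ) : ℂ), 0]
        else
          !![-Complex.I * ((∑ j, k j * m j : ℤ) : ℂ), ((∑ j, (m j) ^ 2 : ℤ) : ℂ) / 2;
             -((∑ j, (m j) ^ 2 : ℤ) : ℂ) / 2
               + ((2 * (2 * Real.pi) ^ (2 * d) * γ ^ 2 * κ * (s m) ^ 2 : ℝ) : ℂ),
             -Complex.I * ((∑ j, k j * m j : ℤ) : ℂ)]) lam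
      → lam.re = 0 := by
  intro k m lam h
  by_cases hm : m = 0
  · rw [if_pos hm] at h
    have h' : IsEigenvalue !![-Complex.I * (0 : ℂ),
        (0 : ℂ); ((2 * (2 * Real.pi) ^ (2 * d) * γ ^ 2 * κ * (s 0) ^ 2 : ℝ) : ℂ),
        -Complex.I * (0 : ℂ)] lam := by
      convert h using 3 <;> norm_num
    exact key 0 0 _ (by simp) (by simp) (by simp) lam h'
  · rw [if_neg hm] at h
    set M : ℤ := ∑ j, (m j) ^ 2 with hM
    set T : ℝ := 2 * (2 * Real.pi) ^ (2 * d) * γ ^ 2 * κ * (s m) ^ 2 with hT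
    have hbc : ((M : ℂ) / 2) * (-(M : ℂ) / 2 + (T : ℂ)) =
        (((M : ℝ) / 2 * (-(M : ℝ) / 2 + T) : ℝ) : ℂ) := by push_cast; ring
    have hMnn : (0 : ℝ) ≤ (M : ℝ) := by
      have : (0 : ℤ) ≤ M := Finset.sum_nonneg fun j _ => sq_nonneg _
      exact_mod_cast this
    have hTle : T ≤ (M : ℝ) / 2 := by
      have := hsmall m hm
      rw [hT]
      nlinarith [this]
    apply key ((∑ j, k j * m j : ℤ) : ℂ) ((M : ℂ) / 2) (-(M : ℂ) / 2 + (T : ℂ))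
      (by simp) _ _ lam h
    · rw [hbc, Complex.ofReal_im]
    · rw [hbc, Complex.ofReal_re]
      nlinarith [hMnn, hTle]
end

section
/- Let b and t be real numbers, and let g > 0 and s ≠ 0 be real. Set c = −(t² + g s²) and d = −t² b. Then the cubic polynomial X³ + bX² + cX + d has three distinct real roots: there exist real numbers μ₁ < μ₂ < μ₃ such that X³ + bX² + cX + d = (X − μ₁)(X − μ₂)(X − μ₃) for all X ∈ ℝ. -/
lemma cubic_factor (b c d r1 r2 r3 : ℝ) (h12 : r1 < r2) (h23 : r2 < r3)
    (p1 : r1^3 + b*r1^2 + c*r1 + d = 0)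
    (p2 : r2^3 + b*r2^2 + c*r2 + d = 0)
    (p3 : r3^3 + b*r3^2 + c*r3 + d = 0) :
    ∀ X : ℝ, X^3 + b*X^2 + c*X + d = (X - r1) * (X - r2) * (X - r3) := by
  have n12 : r1 - r2 ≠ 0 := sub_ne_zero.mpr h12.ne
  have n23 : r2 - r3 ≠ 0 := sub_ne_zero.mpr h23.ne
  have n13 : r1 - r3 ≠ 0 := sub_ne_zero.mpr (h12.trans h23).ne
  have q12 : r1^2 + r1*r2 + r2^2 + b*(r1+r2) + c = 0 := by
    have h : (r1 - r2) * (r1^2 + r1*r2 + r2^2 + b*(r1+r2) + c) = 0 := by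
      linear_combination p1 - p2
    exact (mul_eq_zero.mp h).resolve_left n12
  have q23 : r2^2 + r2*r3 + r3^2 + b*(r2+r3) + c = 0 := by
    have h : (r2 - r3) * (r2^2 + r2*r3 + r3^2 + b*(r2+r3) + c) = 0 := by
      linear_combination p2 - p3
    exact (mul_eq_zero.mp h).resolve_left n23
  have hb : b = -(r1 + r2 + r3) := by
    have h : (r1 - r3) * (r1 + r2 + r3 + b) = 0 := by linear_combination q12 - q23
    have := (mul_eq_zero.mp h).resolve_left n13
    linarith
  have hc : c = r1*r2 + r1*r3 + r2*r3 := by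
    linear_combination q12 - (r1 + r2) * hb
  have hd : d = -(r1 * r2 * r3) := by
    linear_combination p1 - r1^2 * hb - r1 * hc
  subst hb hc hd
  intro X; ring

theorem stmt8 (b t g s : ℝ) (hg : 0 < g) (hs : s ≠ 0) :
    ∃ μ₁ μ₂ μ₃ : ℝ, μ₁ < μ₂ ∧ μ₂ < μ₃ ∧
      ∀ X : ℝ,
        X ^ 3 + b * X ^ 2 + (-(t ^ 2 + g * s ^ 2)) * X + (-(t ^ 2 * b))
          = (X - μ₁) * (X - μ₂) * (X - μ₃) := by
  have hgs : 0 < g * s ^ 2 := by positivity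
  by_cases ht : t = 0
  · -- explicit roots: (-b ± √(b²+4gs²))/2 and 0
    subst ht
    obtain ⟨u, hudef⟩ : ∃ x : ℝ, x = Real.sqrt (b ^ 2 + 4 * (g * s ^ 2)) := ⟨_, rfl⟩
    have hu : u ^ 2 = b ^ 2 + 4 * (g * s ^ 2) := by
      rw [hudef]; exact Real.sq_sqrt (by positivity)
    have hub : |b| < u := by
      rw [← Real.sqrt_sq_eq_abs, hudef]
      exact Real.sqrt_lt_sqrt (sq_nonneg b) (by linarith)
    have hb1 := neg_abs_le b
    have hb2 := le_abs_self b
    refine ⟨(-b - u) / 2, 0, (-b + u) / 2, by linarith, by linarith, ?_⟩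
    have p1 : ((-b - u)/2)^3 + b*((-b - u)/2)^2 + (-((0:ℝ)^2 + g*s^2))*((-b - u)/2)
        + (-((0:ℝ)^2*b)) = 0 := by
      linear_combination ((-b - u) / 8) * hu
    have p2 : (0:ℝ)^3 + b*(0:ℝ)^2 + (-((0:ℝ)^2 + g*s^2))*(0:ℝ) + (-((0:ℝ)^2*b)) = 0 := by
      ring
    have p3 : ((-b + u)/2)^3 + b*((-b + u)/2)^2 + (-((0:ℝ)^2 + g*s^2))*((-b + u)/2)
        + (-((0:ℝ)^2*b)) = 0 := by
      linear_combination ((-b + u) / 8) * hu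
    exact cubic_factor b _ _ ((-b - u)/2) 0 ((-b + u)/2)
      (by linarith) (by linarith) p1 p2 p3
  · -- t ≠ 0 : sign changes at -M, -|t|, |t|, M
    obtain ⟨c, hcdef⟩ : ∃ x : ℝ, x = -(t ^ 2 + g * s ^ 2) := ⟨_, rfl⟩
    obtain ⟨d, hddef⟩ : ∃ x : ℝ, x = -(t ^ 2 * b) := ⟨_, rfl⟩
    obtain ⟨f, hfdef⟩ : ∃ F : ℝ → ℝ, F = fun X => X^3 + b*X^2 + c*X + d := ⟨_, rfl⟩
    have hfc : Continuous f := by rw [hfdef]; fun_prop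
    obtain ⟨T, hTdef⟩ : ∃ x : ℝ, x = |t| := ⟨_, rfl⟩
    have hT : 0 < T := hTdef ▸ abs_pos.mpr ht
    have hT2 : T ^ 2 = t ^ 2 := by rw [hTdef]; exact sq_abs t
    obtain ⟨M, hMdef⟩ : ∃ x : ℝ, x = |b| + |t| + g * s ^ 2 + 1 := ⟨_, rfl⟩
    have hb1 := neg_abs_le b
    have hb2 := le_abs_self b
    have hMT : T < M := by
      rw [hMdef, hTdef]; nlinarith [abs_nonneg b, hgs]
    have hM0 : 0 < M := hT.trans hMT
    have hfT : f T = -(g * s ^ 2 * T) := by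
      rw [hfdef]; simp only; rw [hcdef, hddef]; linear_combination (T + b) * hT2
    have hfnT : f (-T) = g * s ^ 2 * T := by
      rw [hfdef]; simp only; rw [hcdef, hddef]; linear_combination (b - T) * hT2
    have hfTneg : f T < 0 := by rw [hfT]; nlinarith
    have hfnTpos : 0 < f (-T) := by rw [hfnT]; nlinarith
    have hfM : f M = (M + b) * (M ^ 2 - t ^ 2) - g * s ^ 2 * M := by
      rw [hfdef]; simp only; rw [hcdef, hddef]; ring
    have hfnM : f (-M) = (b - M) * (M ^ 2 - t ^ 2) + g * s ^ 2 * M := by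
      rw [hfdef]; simp only; rw [hcdef, hddef]; ring
    have h1 : 1 ≤ M + b := by rw [hMdef]; linarith [abs_nonneg t, hgs]
    have h2 : g * s ^ 2 + 1 ≤ M - T := by rw [hMdef, hTdef]; linarith [abs_nonneg b]
    have hMt2 : (g * s ^ 2 + 1) * M ≤ M ^ 2 - t ^ 2 := by
      have k1 : (g * s ^ 2 + 1) * M ≤ (g * s ^ 2 + 1) * (M + T) := by nlinarith [hT.le, hgs]
      have k2 : (g * s ^ 2 + 1) * (M + T) ≤ (M - T) * (M + T) :=
        mul_le_mul_of_nonneg_right h2 (by linarith)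
      have k3 : (M - T) * (M + T) = M ^ 2 - t ^ 2 := by linear_combination -hT2
      linarith
    have hnn : (0:ℝ) ≤ M ^ 2 - t ^ 2 :=
      le_trans (mul_nonneg (by linarith) hM0.le) hMt2
    have hfMpos : 0 < f M := by
      rw [hfM]
      nlinarith [mul_nonneg (by linarith : (0:ℝ) ≤ M + b - 1) hnn]
    have hfnMneg : f (-M) < 0 := by
      rw [hfnM]
      nlinarith [mul_nonneg (by linarith : (0:ℝ) ≤ M - b - 1) hnn]
    obtain ⟨r1, hr1mem, hr1⟩ := intermediate_value_Ioo (by linarith : -M ≤ -T)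
      hfc.continuousOn ⟨hfnMneg, hfnTpos⟩
    obtain ⟨r2, hr2mem, hr2⟩ := intermediate_value_Ioo' (by linarith : -T ≤ T)
      hfc.continuousOn ⟨hfTneg, hfnTpos⟩
    obtain ⟨r3, hr3mem, hr3⟩ := intermediate_value_Ioo (by linarith : T ≤ M)
      hfc.continuousOn ⟨hfTneg, hfMpos⟩
    rw [hfdef] at hr1 hr2 hr3
    simp only at hr1 hr2 hr3
    rw [hcdef, hddef] at hr1 hr2 hr3
    have h12 : r1 < r2 := by linarith [hr1mem.2, hr2mem.1]
    have h23 : r2 < r3 := by linarith [hr2mem.2, hr3mem.1]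
    exact ⟨r1, r2, r3, h12, h23, cubic_factor b _ _ r1 r2 r3 h12 h23 hr1 hr2 hr3⟩
end

section
/- Let M and K be integers with M ≥ 1, and let g > 0 and s ≠ 0 be real with 4gs² < 1. Define b = (M − 1)/2, c = −(K² + g s²), d = −K²(M − 1)/2, and P(x) = x³ + bx² + cx + d. Then: (i) if M² ≤ 4K², then P(−M/2) > 0 and there is exactly one real number x with x < −M/2 and P(x) = 0; (ii) if M² > 4K², then P(−M/2) < 0 and every real root x of P satisfies x > −M/2. -/
lemma cubic_two_roots_false (b c d a x₁ x₂ : ℝ)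
    (hP1 : x₁ ^ 3 + b * x₁ ^ 2 + c * x₁ + d = 0)
    (hP2 : x₂ ^ 3 + b * x₂ ^ 2 + c * x₂ + d = 0)
    (hne : x₁ ≠ x₂) (h1 : x₁ < a) (h2 : x₂ < a)
    (h3 : a < -b - x₁ - x₂)
    (hPa : 0 < a ^ 3 + b * a ^ 2 + c * a + d) : False := by
  have hsub : (x₁ - x₂) * (x₁ ^ 2 + x₁ * x₂ + x₂ ^ 2 + b * (x₁ + x₂) + c) = 0 := by
    linear_combination hP1 - hP2
  have hq : x₁ ^ 2 + x₁ * x₂ + x₂ ^ 2 + b * (x₁ + x₂) + c = 0 := by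
    rcases mul_eq_zero.1 hsub with h | h
    · exact absurd (sub_eq_zero.1 h) hne
    · exact h
  have hid : a ^ 3 + b * a ^ 2 + c * a + d
      = (a - x₁) * (a - x₂) * (a - (-b - x₁ - x₂)) := by
    linear_combination hP1 + (a - x₁) * hq
  have hneg : (a - x₁) * (a - x₂) * (a - (-b - x₁ - x₂)) < 0 :=
    mul_neg_of_pos_of_neg (mul_pos (by linarith) (by linarith)) (by linarith)
  linarith [hid ▸ hPa]

lemma part1 (m k g s : ℝ) (hm : 1 ≤ m) (hg : 0 < g) (hs2 : 0 < s ^ 2)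
    (hsmall : 4 * g * s ^ 2 < 1) (hle : m ^ 2 ≤ 4 * k ^ 2) :
    0 < (-m / 2) ^ 3 + ((m - 1) / 2) * (-m / 2) ^ 2
        + (-(k ^ 2 + g * s ^ 2)) * (-m / 2) + (-(k ^ 2 * ((m - 1) / 2))) ∧
    ∃! x : ℝ, x < -m / 2 ∧
      x ^ 3 + ((m - 1) / 2) * x ^ 2
        + (-(k ^ 2 + g * s ^ 2)) * x + (-(k ^ 2 * ((m - 1) / 2))) = 0 := by
  have hk2 : (0 : ℝ) ≤ k ^ 2 := sq_nonneg _
  have hgs : 0 < g * s ^ 2 := mul_pos hg hs2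
  set f : ℝ → ℝ := fun x => x ^ 3 + ((m - 1) / 2) * x ^ 2
      + (-(k ^ 2 + g * s ^ 2)) * x + (-(k ^ 2 * ((m - 1) / 2))) with hf
  have hPa : 0 < f (-m / 2) := by
    show (0:ℝ) < (-m / 2) ^ 3 + ((m - 1) / 2) * (-m / 2) ^ 2
        + (-(k ^ 2 + g * s ^ 2)) * (-m / 2) + (-(k ^ 2 * ((m - 1) / 2)))
    nlinarith
  refine ⟨hPa, ?_⟩
  set R : ℝ := 1 + (m - 1) / 2 + k ^ 2 + g * s ^ 2 + k ^ 2 * ((m - 1) / 2) with hR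
  have hkm : 0 ≤ k ^ 2 * ((m - 1) / 2) := mul_nonneg hk2 (by linarith)
  have hR1 : 1 ≤ R := by rw [hR]; linarith
  have hRa : -R < -m / 2 := by rw [hR]; linarith
  have hfR : f (-R) < 0 := by
    show (-R) ^ 3 + ((m - 1) / 2) * (-R) ^ 2
        + (-(k ^ 2 + g * s ^ 2)) * (-R) + (-(k ^ 2 * ((m - 1) / 2))) < 0
    nlinarith [sq_nonneg R, mul_nonneg hk2 (le_trans zero_le_one hR1),
      mul_nonneg hkm (mul_self_nonneg R),
      mul_nonneg (mul_nonneg hk2 (by linarith : (0:ℝ) ≤ R - 1)) (le_trans zero_le_one hR1),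
      mul_nonneg (mul_nonneg hgs.le (by linarith : (0:ℝ) ≤ R - 1)) (le_trans zero_le_one hR1)]
  have hcont : ContinuousOn f (Set.Icc (-R) (-m / 2)) := by
    apply Continuous.continuousOn
    exact (((continuous_pow 3).add (continuous_const.mul (continuous_pow 2))).add
      (continuous_const.mul continuous_id)).add continuous_const
  obtain ⟨x, hxmem, hfx⟩ := intermediate_value_Ioo (le_of_lt hRa) hcont ⟨hfR, hPa⟩
  have hxlt : x < -m / 2 := hxmem.2
  refine ⟨x, ⟨hxlt, hfx⟩, ?_⟩
  rintro y ⟨hy, hfy⟩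
  by_contra hne
  exact cubic_two_roots_false ((m - 1) / 2) (-(k ^ 2 + g * s ^ 2))
      (-(k ^ 2 * ((m - 1) / 2))) (-m / 2) y x hfy hfx hne hy hxlt
      (by linarith) hPa

lemma part2 (m k g s : ℝ) (hm : 1 ≤ m) (hg : 0 < g) (hs2 : 0 < s ^ 2)
    (hsmall : 4 * g * s ^ 2 < 1) (hgap : m ≤ m ^ 2 - 4 * k ^ 2)
    (hgap1 : 4 * k ^ 2 + 1 ≤ m ^ 2) :
    (-m / 2) ^ 3 + ((m - 1) / 2) * (-m / 2) ^ 2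
        + (-(k ^ 2 + g * s ^ 2)) * (-m / 2) + (-(k ^ 2 * ((m - 1) / 2))) < 0 ∧
    ∀ x : ℝ,
      x ^ 3 + ((m - 1) / 2) * x ^ 2
        + (-(k ^ 2 + g * s ^ 2)) * x + (-(k ^ 2 * ((m - 1) / 2))) = 0 →
      -m / 2 < x := by
  have hgs : 0 < g * s ^ 2 := mul_pos hg hs2
  have hPa : (-m / 2) ^ 3 + ((m - 1) / 2) * (-m / 2) ^ 2
      + (-(k ^ 2 + g * s ^ 2)) * (-m / 2) + (-(k ^ 2 * ((m - 1) / 2))) < 0 := by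
    have h1 : m * (4 * g * s ^ 2) < m * 1 :=
      mul_lt_mul_of_pos_left hsmall (by linarith)
    nlinarith
  refine ⟨hPa, ?_⟩
  intro x hfx
  by_contra h
  push_neg at h
  have hQ : 0 < x ^ 2 - x / 2 + m / 4 - k ^ 2 - g * s ^ 2 := by
    nlinarith [mul_nonneg (by linarith : (0:ℝ) ≤ -x - m / 2)
      (by linarith : (0:ℝ) ≤ m / 2 - x)]
  have hid : (x ^ 3 + ((m - 1) / 2) * x ^ 2
        + (-(k ^ 2 + g * s ^ 2)) * x + (-(k ^ 2 * ((m - 1) / 2))))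
      - ((-m / 2) ^ 3 + ((m - 1) / 2) * (-m / 2) ^ 2
        + (-(k ^ 2 + g * s ^ 2)) * (-m / 2) + (-(k ^ 2 * ((m - 1) / 2))))
      = (x - (-m / 2)) * (x ^ 2 - x / 2 + m / 4 - k ^ 2 - g * s ^ 2) := by ring
  have hle0 := mul_nonpos_of_nonpos_of_nonneg (by linarith : x - (-m / 2) ≤ 0) hQ.le
  rw [← hid, hfx] at hle0
  linarith

theorem stmt9 (M K : ℤ) (hM : 1 ≤ M) (g s : ℝ) (hg : 0 < g) (hs : s ≠ 0)
    (hsmall : 4 * g * s ^ 2 < 1) :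
    (M ^ 2 ≤ 4 * K ^ 2 →
        0 < (fun x : ℝ => x ^ 3 + (((M : ℝ) - 1) / 2) * x ^ 2
              + (-((K : ℝ) ^ 2 + g * s ^ 2)) * x
              + (-((K : ℝ) ^ 2 * (((M : ℝ) - 1) / 2)))) (-(M : ℝ) / 2) ∧
        ∃! x : ℝ, x < -(M : ℝ) / 2 ∧
          (fun x : ℝ => x ^ 3 + (((M : ℝ) - 1) / 2) * x ^ 2
              + (-((K : ℝ) ^ 2 + g * s ^ 2)) * x
              + (-((K : ℝ) ^ 2 * (((M : ℝ) - 1) / 2)))) x = 0) ∧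
    (4 * K ^ 2 < M ^ 2 →
        (fun x : ℝ => x ^ 3 + (((M : ℝ) - 1) / 2) * x ^ 2
              + (-((K : ℝ) ^ 2 + g * s ^ 2)) * x
              + (-((K : ℝ) ^ 2 * (((M : ℝ) - 1) / 2)))) (-(M : ℝ) / 2) < 0 ∧
        ∀ x : ℝ,
          (fun x : ℝ => x ^ 3 + (((M : ℝ) - 1) / 2) * x ^ 2
              + (-((K : ℝ) ^ 2 + g * s ^ 2)) * x
              + (-((K : ℝ) ^ 2 * (((M : ℝ) - 1) / 2)))) x = 0 →
          -(M : ℝ) / 2 < x) := by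
  have hm1 : (1 : ℝ) ≤ (M : ℝ) := by exact_mod_cast hM
  have hs2 : 0 < s ^ 2 := by positivity
  constructor
  · intro hle
    have hk2m : (M : ℝ) ^ 2 ≤ 4 * (K : ℝ) ^ 2 := by exact_mod_cast hle
    exact part1 (M : ℝ) (K : ℝ) g s hm1 hg hs2 hsmall hk2m
  · intro hlt
    have h2K : 2 * |K| + 1 ≤ M := by
      by_contra h
      push_neg at h
      have hKM : M ≤ 2 * |K| := by omega
      nlinarith [abs_nonneg K, sq_abs K]
    have hgap : M ≤ M ^ 2 - 4 * K ^ 2 := by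
      have e : (M - 2 * |K| - 1) * (M + 2 * |K|)
          = M ^ 2 - 4 * |K| ^ 2 - M - 2 * |K| := by ring
      have hnn := mul_nonneg (by linarith : (0:ℤ) ≤ M - 2 * |K| - 1)
        (by positivity : (0:ℤ) ≤ M + 2 * |K|)
      linarith [hnn, e, sq_abs K, abs_nonneg K]
    have hgapR : (M : ℝ) ≤ (M : ℝ) ^ 2 - 4 * (K : ℝ) ^ 2 := by exact_mod_cast hgap
    have hgap1 : 4 * (K : ℝ) ^ 2 + 1 ≤ (M : ℝ) ^ 2 := by exact_mod_cast hlt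
    exact part2 (M : ℝ) (K : ℝ) g s hm1 hg hs2 hsmall hgapR hgap1
end

section
/- Let d ≥ 1 be an integer, m, k ∈ ℤ^d with m ≠ 0, and let a be a real number with 0 < a < m²/2. Set s = m²/2 and t = k·m, and let M_m = [[s, it], [−it, s]]. Then the eigenvalues of the matrix product (M_m − diag(0, a))·(M_m − diag(a, 0)) are exactly (√(s(s − a)) + t)² and (√(s(s − a)) − t)²; in particular, this matrix has no negative real eigenvalue. -/
/-- The Hermitian Fourier block `M_m = [[m²/2, i(k·m)], [−i(k·m), m²/2]]`. -/
noncomputable def Mmat (d : ℕ) (m k : Fin d → ℤ) : Matrix (Fin 2) (Fin 2) ℂ :=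
  !![((∑ j, (m j) ^ 2 : ℤ) : ℂ) / 2, Complex.I * ((∑ j, k j * m j : ℤ) : ℂ);
     -Complex.I * ((∑ j, k j * m j : ℤ) : ℂ), ((∑ j, (m j) ^ 2 : ℤ) : ℂ) / 2]

lemma eig_iff_det' (A : Matrix (Fin 2) (Fin 2) ℂ) (lam : ℂ) :
    IsEigenvalue A lam ↔ (A - lam • 1).det = 0 := by
  rw [IsEigenvalue, ← Matrix.exists_mulVec_eq_zero_iff]
  constructor
  · rintro ⟨v, hv, h⟩
    exact ⟨v, hv, by simp [Matrix.sub_mulVec, Matrix.smul_mulVec, Matrix.one_mulVec, h]⟩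
  · rintro ⟨v, hv, h⟩
    refine ⟨v, hv, ?_⟩
    rwa [Matrix.sub_mulVec, Matrix.smul_mulVec, Matrix.one_mulVec, sub_eq_zero] at h

lemma diagA1 (a : ℂ) : Matrix.diagonal ![0, a] = !![0, 0; 0, a] := by
  ext i j; fin_cases i <;> fin_cases j <;> simp [Matrix.diagonal]

lemma diagA2 (a : ℂ) : Matrix.diagonal ![a, 0] = !![a, 0; 0, 0] := by
  ext i j; fin_cases i <;> fin_cases j <;> simp [Matrix.diagonal]

lemma detA (d : ℕ) (m k : Fin d → ℤ) (a : ℝ) (lam : ℂ) (r S T : ℝ)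
    (hSc : ((∑ j, (m j) ^ 2 : ℤ) : ℂ) = 2 * (S:ℂ))
    (hTc : ((∑ j, k j * m j : ℤ) : ℂ) = (T:ℂ))
    (hr2 : (r:ℂ)^2 = (S:ℂ) * ((S:ℂ) - (a:ℂ))) :
    ((Mmat d m k - Matrix.diagonal ![0, (a : ℂ)]) *
            (Mmat d m k - Matrix.diagonal ![(a : ℂ), 0]) - lam • 1).det
      = (((r + T : ℝ) : ℂ)^2 - lam) * (((r - T : ℝ) : ℂ)^2 - lam) := by
  rw [Matrix.det_fin_two]
  simp [Mmat, diagA1, diagA2, Matrix.mul_apply, Fin.sum_univ_two, Matrix.one_apply, hSc, hTc]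
  linear_combination (2*(T:ℂ)^2 - lam) * hr2 + (T^2*(r:ℂ)^2*2 + T^2*lam*2 - T^4 + (Complex.I*T)^2*(-(2:ℂ)*T^2)) * Complex.I_sq + (3*(T:ℂ)^4*Complex.I^2 - 2*S*a*T^2 + 2*S^2*T^2 - 2*T^2*(r:ℂ)^2) * Complex.I_sq + (-(r:ℂ)^2 - S^2 + S*a + 3*lam) * hr2

theorem stmt12 (d : ℕ) (hd : 1 ≤ d) (m k : Fin d → ℤ) (hm : m ≠ 0)
    (a : ℝ) (ha0 : 0 < a) (ha : a < ((∑ j, (m j) ^ 2 : ℤ) : ℝ) / 2) :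
    (∀ lam : ℂ,
        IsEigenvalue
          ((Mmat d m k - Matrix.diagonal ![0, (a : ℂ)]) *
            (Mmat d m k - Matrix.diagonal ![(a : ℂ), 0])) lam ↔
          lam =
            ((Real.sqrt ((((∑ j, (m j) ^ 2 : ℤ) : ℝ) / 2) *
                  (((∑ j, (m j) ^ 2 : ℤ) : ℝ) / 2 - a))
              + ((∑ j, k j * m j : ℤ) : ℝ) : ℝ) : ℂ) ^ 2 ∨
          lam =
            ((Real.sqrt ((((∑ j, (m j) ^ 2 : ℤ) : ℝ) / 2) *
                  (((∑ j, (m j) ^ 2 : ℤ) : ℝ) / 2 - a))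
              - ((∑ j, k j * m j : ℤ) : ℝ) : ℝ) : ℂ) ^ 2) ∧
    (∀ lam : ℂ,
        IsEigenvalue
          ((Mmat d m k - Matrix.diagonal ![0, (a : ℂ)]) *
            (Mmat d m k - Matrix.diagonal ![(a : ℂ), 0])) lam →
        ¬(lam.im = 0 ∧ lam.re < 0)) := by
  set S : ℝ := ((∑ j, (m j) ^ 2 : ℤ) : ℝ) / 2 with hS
  set T : ℝ := ((∑ j, k j * m j : ℤ) : ℝ) with hT
  set r : ℝ := Real.sqrt (S * (S - a)) with hrdef
  have hb : (0:ℝ) ≤ S * (S - a) := by nlinarith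
  have hr2 : r ^ 2 = S * (S - a) := Real.sq_sqrt hb
  have hr2c : (r:ℂ)^2 = (S:ℂ) * ((S:ℂ) - (a:ℂ)) := by
    have := congrArg (fun x : ℝ => (x:ℂ)) hr2
    push_cast at this
    simpa using this
  have hSc : ((∑ j, (m j) ^ 2 : ℤ) : ℂ) = 2 * (S:ℂ) := by
    rw [hS]; push_cast; ring
  have hTc : ((∑ j, k j * m j : ℤ) : ℂ) = (T:ℂ) := by
    rw [hT]; push_cast; ring
  have key : ∀ lam : ℂ,
      IsEigenvalue
        ((Mmat d m k - Matrix.diagonal ![0, (a : ℂ)]) *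
          (Mmat d m k - Matrix.diagonal ![(a : ℂ), 0])) lam ↔
        lam = ((r + T : ℝ) : ℂ) ^ 2 ∨ lam = ((r - T : ℝ) : ℂ) ^ 2 := by
    intro lam
    rw [eig_iff_det', detA d m k a lam r S T hSc hTc hr2c, mul_eq_zero,
      sub_eq_zero, sub_eq_zero]
    constructor
    · rintro (h | h) <;> [left; right] <;> exact h.symm
    · rintro (h | h) <;> [left; right] <;> exact h.symm
  refine ⟨key, ?_⟩
  intro lam hlam
  rcases (key lam).mp hlam with h | h <;>
  · rintro ⟨him, hre⟩
    rw [h, ← Complex.ofReal_pow, Complex.ofReal_re] at hre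
    nlinarith [sq_nonneg (r + T), sq_nonneg (r - T)]
end

section
/- Let d ≥ 1 be an integer, k ∈ ℤ^d, and η₀ ∈ (0, 1] a real number. Then for every m ∈ ℤ^d with m ≠ 0, every real number η with η₀ ≤ η ≤ 1, and every real number λ with λ ≥ 4|k|²/√η₀, one has |(λ + i(k·m))² + (|m|⁴/4)·η|² ≥ (η₀²/32)·|m|⁸, where |·| on the left is the complex modulus, k·m = Σⱼ kⱼmⱼ, |k|² = Σⱼ kⱼ², |m|² = Σⱼ mⱼ², |m|⁴ = (|m|²)², and |m|⁸ = (|m|²)⁴. -/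
theorem stmt14 (d : ℕ) (hd : 1 ≤ d) (k : Fin d → ℤ) (η₀ : ℝ)
    (h0 : 0 < η₀) (h1 : η₀ ≤ 1) :
    ∀ m : Fin d → ℤ, m ≠ 0 →
    ∀ η : ℝ, η₀ ≤ η → η ≤ 1 →
    ∀ lam : ℝ, 4 * ((∑ j, (k j) ^ 2 : ℤ) : ℝ) / Real.sqrt η₀ ≤ lam →
      η₀ ^ 2 / 32 * ((∑ j, (m j) ^ 2 : ℤ) : ℝ) ^ 4 ≤
        (‖
          (((lam : ℂ) + Complex.I * ((∑ j, k j * m j : ℤ) : ℂ)) ^ 2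
            + ((∑ j, (m j) ^ 2 : ℤ) : ℂ) ^ 2 / 4 * (η : ℂ))‖) ^ 2 := by
  intro m hm η hη0 hη1 lam hlam
  set M : ℝ := ((∑ j, (m j) ^ 2 : ℤ) : ℝ) with hM
  set K : ℝ := ((∑ j, (k j) ^ 2 : ℤ) : ℝ) with hK
  set t : ℝ := ((∑ j, k j * m j : ℤ) : ℝ) with ht
  -- basic facts
  have hKnn : (0:ℝ) ≤ K := by
    have h' : (0:ℤ) ≤ ∑ j, (k j) ^ 2 := Finset.sum_nonneg fun j _ => sq_nonneg _
    rw [hK]; exact_mod_cast h'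
  have hM1 : (1:ℝ) ≤ M := by
    obtain ⟨j, hj⟩ : ∃ j, m j ≠ 0 := Function.ne_iff.mp hm
    have h1' : (1:ℤ) ≤ (m j) ^ 2 := by
      have : 0 < (m j) ^ 2 := by positivity
      omega
    have h2' : (m j) ^ 2 ≤ ∑ i, (m i) ^ 2 :=
      Finset.single_le_sum (f := fun i => (m i) ^ 2)
        (fun i _ => sq_nonneg _) (Finset.mem_univ j)
    have h3' : (1:ℤ) ≤ ∑ i, (m i) ^ 2 := le_trans h1' h2'
    rw [hM]; exact_mod_cast h3'
  have hCS : t ^ 2 ≤ K * M := by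
    have := Finset.sum_mul_sq_le_sq_mul_sq Finset.univ k m
    have h2 : ((∑ j, k j * m j : ℤ) : ℝ) ^ 2 ≤
        ((∑ j, (k j) ^ 2 : ℤ) : ℝ) * ((∑ j, (m j) ^ 2 : ℤ) : ℝ) := by
      exact_mod_cast this
    simpa [hM, hK, ht] using h2
  have hsqrt : 0 < Real.sqrt η₀ := Real.sqrt_pos.mpr h0
  have hlam0 : 0 ≤ lam := le_trans (by positivity) hlam
  have hlamsq : 16 * K ^ 2 / η₀ ≤ lam ^ 2 := by
    have key : (4 * K / Real.sqrt η₀) ^ 2 = 16 * K ^ 2 / η₀ := by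
      rw [div_pow, Real.sq_sqrt h0.le]; ring
    calc 16 * K ^ 2 / η₀ = (4 * K / Real.sqrt η₀) ^ 2 := key.symm
      _ ≤ lam ^ 2 := pow_le_pow_left₀ (by positivity) hlam 2
  -- rewrite the modulus squared
  have habs : (‖
          (((lam : ℂ) + Complex.I * ((∑ j, k j * m j : ℤ) : ℂ)) ^ 2
            + ((∑ j, (m j) ^ 2 : ℤ) : ℂ) ^ 2 / 4 * (η : ℂ))‖) ^ 2
      = (lam ^ 2 - t ^ 2 + M ^ 2 / 4 * η) ^ 2 + (2 * lam * t) ^ 2 := by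
    rw [← Complex.normSq_eq_norm_sq]
    have hz : (((lam : ℂ) + Complex.I * ((∑ j, k j * m j : ℤ) : ℂ)) ^ 2
        + ((∑ j, (m j) ^ 2 : ℤ) : ℂ) ^ 2 / 4 * (η : ℂ))
        = ((lam ^ 2 - t ^ 2 + M ^ 2 / 4 * η : ℝ) : ℂ)
          + ((2 * lam * t : ℝ) : ℂ) * Complex.I := by
      rw [ht, hM]
      push_cast
      linear_combination (∑ j, ((k j : ℂ) * (m j : ℂ))) ^ 2 * Complex.I_sq
    rw [hz, Complex.normSq_add_mul_I]
  rw [habs]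
  clear habs
  clear_value M K t
  clear hM hK ht hlam hm
  set s : ℝ := M ^ 2 / 4 * η with hs
  clear_value s
  have hsge : η₀ * M ^ 2 / 4 ≤ s := by
    rw [hs]; nlinarith [sq_nonneg M]
  rcases le_or_gt (t ^ 2) (lam ^ 2) with hcase | hcase
  · -- λ² ≥ t²: real part ≥ s ≥ η₀M²/4
    have h5 : η₀ * M ^ 2 / 4 ≤ lam ^ 2 - t ^ 2 + s := by linarith
    have h6 : (η₀ * M ^ 2 / 4) ^ 2 ≤ (lam ^ 2 - t ^ 2 + s) ^ 2 :=
      pow_le_pow_left₀ (by positivity) h5 2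
    linarith [sq_nonneg (2 * lam * t), sq_nonneg (η₀ * M ^ 2)]
  · -- λ² < t²: then K > 0, K < η₀M/16, so t² ≤ KM < η₀M²/16 ≤ s/4
    have hKpos : 0 < K := by
      rcases eq_or_lt_of_le hKnn with h | h
      · exfalso
        have : t ^ 2 ≤ 0 := by rw [← h] at hCS; simpa using hCS
        nlinarith [sq_nonneg lam, sq_nonneg t]
      · exact h
    have hKsmall : 16 * K < η₀ * M := by
      -- 16K²/η₀ ≤ λ² < t² ≤ KM
      have h2 : 16 * K ^ 2 / η₀ < K * M := lt_of_le_of_lt hlamsq (lt_of_lt_of_le hcase hCS)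
      have h3 : 16 * K ^ 2 < η₀ * (K * M) := by
        rw [div_lt_iff₀ h0] at h2; linarith
      nlinarith
    have htsmall : t ^ 2 < η₀ * M ^ 2 / 16 := by
      have : K * M < η₀ * M ^ 2 / 16 := by nlinarith
      linarith
    -- s ≥ η₀M²/4 ≥ 4t², so s − t² ≥ 3s/4, R ≥ 9s²/16 ≥ 9η₀²M⁴/256 > η₀²M⁴/32
    have h4t : 4 * t ^ 2 ≤ s := by linarith
    have h5 : 3 * (η₀ * M ^ 2) / 16 ≤ lam ^ 2 - t ^ 2 + s := by
      linarith [sq_nonneg lam]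
    have h6 : (3 * (η₀ * M ^ 2) / 16) ^ 2 ≤ (lam ^ 2 - t ^ 2 + s) ^ 2 :=
      pow_le_pow_left₀ (by positivity) h5 2
    linarith [sq_nonneg (2 * lam * t), sq_nonneg (η₀ * M ^ 2)]
end
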